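/- Let G be a bipartite graph with bipartition {A, B} and let S ∈ F_A(G), i.e., ∅ ≠ S ⊊ A, N_G(S) ≠ B, and N_G(w) ⊄ N_G(S) for all w ∈ A \ S. Then N_G(B \ N_G(S)) = A \ S. -/
import Mathlib


/-- **Lemma 5.8**: a bipartite graph with bipartition `{A, B}` is given by its adjacency
relation `r : A → B → Prop`.  If `S ∈ F_A(G)`, i.e. `∅ ≠ S ⊊ A`, `N_G(S) ≠ B`, and
`N_G(w) ⊄ N_G(S)` for all `w ∈ A \ S`, then `N_G(B \ N_G(S)) = A \ S`. -/
theorem statement14 {A B : Type*} (r : A → B → Prop) (S : Set A)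
    (h1 : S.Nonempty) (h2 : S ≠ Set.univ)
    (h3 : {b | ∃ a ∈ S, r a b} ≠ Set.univ)
    (h4 : ∀ w ∉ S, ¬ {b | r w b} ⊆ {b | ∃ a ∈ S, r a b}) :
    {a | ∃ b ∈ {b | ∃ a ∈ S, r a b}ᶜ, r a b} = Sᶜ := by
  ext a
  constructor
  · rintro ⟨b, hb, hab⟩ haS
    exact hb ⟨a, haS, hab⟩
  · intro haS
    have := h4 a haS
    rw [Set.not_subset] at this
    obtain ⟨b, hb1, hb2⟩ := this
    exact ⟨b, hb2, hb1⟩
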